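/- arXiv:2110.15584 — 4 statements merged into one kernel-verified Lean document; each statement's English description precedes it below -/
import Mathlib

section
/- Let I be an interval of length h_e, and let N, C be disjoint measurable subsets of I with |N| + |C| = h_e and |N| > 0. Let μ : I → ℝ be a measurable function vanishing on N, and suppose μ has finite fractional Sobolev seminorm |μ|_{δ,I}² = ∫_I ∫_I |μ(ξ) − μ(η)|² / |ξ − η|^{1+2δ} dη dξ for some 0 < δ ≤ 1/2. Then ‖μ‖_{L²(I)} ≤ |N|^{−1/2} · h_e^{1/2+δ} · |μ|_{δ,I}. -/
open MeasureTheory Set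

/-- L² estimate on an interval for a function vanishing on a subset `N` of
positive measure, in terms of the Gagliardo fractional seminorm of order `δ`. -/
theorem stmt0 (a b he δ : ℝ) (hhe : 0 < he) (hab : b - a = he)
    (N C : Set ℝ) (hNm : MeasurableSet N) (hCm : MeasurableSet C)
    (hNI : N ⊆ Icc a b) (hCI : C ⊆ Icc a b) (hdisj : Disjoint N C)
    (hsum : (volume N).toReal + (volume C).toReal = he)
    (hNpos : 0 < (volume N).toReal)
    (μ : ℝ → ℝ) (hμm : Measurable μ)
    (hμN : ∀ᵐ x ∂(volume.restrict N), μ x = 0)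
    (hδ : 0 < δ) (hδ' : δ ≤ 1 / 2)
    (hL2 : IntegrableOn (fun x => μ x ^ 2) (Icc a b))
    (hsem : IntegrableOn
      (fun p : ℝ × ℝ => (μ p.1 - μ p.2) ^ 2 / |p.1 - p.2| ^ (1 + 2 * δ))
      (Icc a b ×ˢ Icc a b)) :
    Real.sqrt (∫ x in Icc a b, μ x ^ 2) ≤
      (volume N).toReal ^ (-(1 : ℝ) / 2) * he ^ ((1 : ℝ) / 2 + δ) *
        Real.sqrt (∫ ξ in Icc a b, ∫ η in Icc a b,
          (μ ξ - μ η) ^ 2 / |ξ - η| ^ (1 + 2 * δ)) := by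
  set p : ℝ := 1 + 2 * δ with hp_def
  have hp : (0:ℝ) < p := by positivity
  set m : ℝ := (volume N).toReal with hm_def
  set f : ℝ × ℝ → ℝ := fun q => (μ q.1 - μ q.2) ^ 2 / |q.1 - q.2| ^ p with hf_def
  have hhep : (0:ℝ) < he ^ p := Real.rpow_pos_of_pos hhe p
  have hNfin : volume N < ⊤ :=
    lt_of_le_of_lt (measure_mono hNI) measure_Icc_lt_top
  -- nonnegativity of f
  have hf0 : ∀ q : ℝ × ℝ, 0 ≤ f q := fun q =>
    div_nonneg (sq_nonneg _) (Real.rpow_nonneg (abs_nonneg _) _)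
  -- product integrability
  have hsem' : Integrable f ((volume.restrict (Icc a b)).prod (volume.restrict (Icc a b))) := by
    rw [Measure.prod_restrict, ← Measure.volume_eq_prod]; exact hsem
  have hInner : ∀ᵐ ξ ∂(volume.restrict (Icc a b)),
      Integrable (fun η => f (ξ, η)) (volume.restrict (Icc a b)) := hsem'.prod_right_ae
  have hOuter : Integrable (fun ξ => ∫ η in Icc a b, f (ξ, η)) (volume.restrict (Icc a b)) :=
    hsem'.integral_prod_left
  -- pointwise (a.e. in ξ) lower bound for the inner integral
  have key : ∀ᵐ ξ ∂(volume.restrict (Icc a b)),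
      μ ξ ^ 2 * (m / he ^ p) ≤ ∫ η in Icc a b, f (ξ, η) := by
    filter_upwards [hInner, ae_restrict_mem measurableSet_Icc] with ξ hint hξI
    have hNsub : IntegrableOn (fun η => f (ξ, η)) N := MeasureTheory.IntegrableOn.mono_set hint hNI
    have step1 : ∫ η in N, f (ξ, η) ≤ ∫ η in Icc a b, f (ξ, η) := by
      apply setIntegral_mono_set hint
      · exact Filter.Eventually.of_forall fun η => hf0 _
      · exact HasSubset.Subset.eventuallyLE hNI
    have step2 : ∫ η in N, (μ ξ ^ 2 / he ^ p) ≤ ∫ η in N, f (ξ, η) := by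
      apply integral_mono_ae (μ := volume.restrict N) (integrableOn_const (C := μ ξ ^ 2 / he ^ p) hNfin.ne enorm_ne_top) hNsub
      filter_upwards [hμN, ae_restrict_mem hNm] with η hη0 hηN
      simp only [hf_def, hη0, sub_zero]
      rcases eq_or_ne ξ η with h | h
      · have : μ ξ = 0 := h ▸ hη0
        simp [this]
      · have habs : 0 < |ξ - η| := abs_pos.2 (sub_ne_zero.2 h)
        have hle : |ξ - η| ≤ he := by
          rw [← hab]
          have h1 := hξI.1; have h2 := hξI.2
          have h3 := (hNI hηN).1; have h4 := (hNI hηN).2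
          rw [abs_le]; constructor <;> linarith
        have : |ξ - η| ^ p ≤ he ^ p :=
          Real.rpow_le_rpow (abs_nonneg _) hle hp.le
        exact div_le_div_of_nonneg_left (sq_nonneg _) (Real.rpow_pos_of_pos habs p) this
    have step2' : μ ξ ^ 2 * (m / he ^ p) ≤ ∫ η in N, f (ξ, η) := by
      calc μ ξ ^ 2 * (m / he ^ p) = m * (μ ξ ^ 2 / he ^ p) := by ring
        _ = ∫ η in N, (μ ξ ^ 2 / he ^ p) := by rw [setIntegral_const, smul_eq_mul]; rfl
        _ ≤ _ := step2
    exact step2'.trans step1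
  -- integrate in ξ
  have hInt1 : Integrable (fun ξ => μ ξ ^ 2 * (m / he ^ p)) (volume.restrict (Icc a b)) :=
    hL2.mul_const _
  have main : (∫ x in Icc a b, μ x ^ 2) * (m / he ^ p) ≤
      ∫ ξ in Icc a b, ∫ η in Icc a b, f (ξ, η) := by
    rw [← integral_mul_const]
    exact integral_mono_ae hInt1 hOuter key
  have hS : 0 ≤ ∫ ξ in Icc a b, ∫ η in Icc a b, f (ξ, η) :=
    integral_nonneg fun ξ => integral_nonneg fun η => hf0 _
  have hμ2 : (∫ x in Icc a b, μ x ^ 2) ≤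
      (he ^ p / m) * ∫ ξ in Icc a b, ∫ η in Icc a b, f (ξ, η) := by
    have hc : (0:ℝ) < m / he ^ p := by positivity
    have h1 : (∫ x in Icc a b, μ x ^ 2) ≤
        (∫ ξ in Icc a b, ∫ η in Icc a b, f (ξ, η)) / (m / he ^ p) :=
      (le_div_iff₀ hc).2 main
    have h2 : (∫ ξ in Icc a b, ∫ η in Icc a b, f (ξ, η)) / (m / he ^ p)
        = (he ^ p / m) * ∫ ξ in Icc a b, ∫ η in Icc a b, f (ξ, η) := by
      field_simp
    rw [h2] at h1; exact h1
  calc Real.sqrt (∫ x in Icc a b, μ x ^ 2)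
      ≤ Real.sqrt ((he ^ p / m) * ∫ ξ in Icc a b, ∫ η in Icc a b, f (ξ, η)) :=
        Real.sqrt_le_sqrt hμ2
    _ = Real.sqrt (he ^ p / m) * Real.sqrt (∫ ξ in Icc a b, ∫ η in Icc a b, f (ξ, η)) :=
        Real.sqrt_mul (by positivity) _
    _ = m ^ (-(1:ℝ)/2) * he ^ ((1:ℝ)/2 + δ) *
        Real.sqrt (∫ ξ in Icc a b, ∫ η in Icc a b, f (ξ, η)) := by
        congr 1
        rw [Real.sqrt_div hhep.le]
        have h1 : (he ^ p) ^ ((1:ℝ)/2) = he ^ ((1:ℝ)/2 + δ) := by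
          rw [← Real.rpow_mul hhe.le]
          congr 1
          rw [hp_def]; ring
        rw [Real.sqrt_eq_rpow, h1, Real.sqrt_eq_rpow, div_eq_mul_inv,
          ← Real.rpow_neg (le_of_lt hNpos), mul_comm]
        norm_num
end

section
/- Let I be an interval of length h_e, and let N, C be disjoint measurable subsets of I with |N| + |C| = h_e and |N|, |C| > 0. Let μ : I → ℝ be measurable, vanishing a.e. on N, with finite Gagliardo seminorm |μ|_{δ,I} for some 0 < δ ≤ 1/2. Then ‖μ‖_{L¹(I)} ≤ (|C|^{1/2}/|N|^{1/2}) · h_e^{1/2+δ} · |μ|_{δ,I}. -/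
open MeasureTheory Set

/-- L¹ estimate on an interval for a function vanishing on `N`, in terms of the
measures of `N`, `C` and the Gagliardo fractional seminorm of order `δ`. -/
theorem stmt1 (a b he δ : ℝ) (hhe : 0 < he) (hab : b - a = he)
    (N C : Set ℝ) (hNm : MeasurableSet N) (hCm : MeasurableSet C)
    (hNI : N ⊆ Icc a b) (hCI : C ⊆ Icc a b) (hdisj : Disjoint N C)
    (hsum : (volume N).toReal + (volume C).toReal = he)
    (hNpos : 0 < (volume N).toReal) (hCpos : 0 < (volume C).toReal)
    (μ : ℝ → ℝ) (hμm : Measurable μ)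
    (hμN : ∀ᵐ x ∂(volume.restrict N), μ x = 0)
    (hδ : 0 < δ) (hδ' : δ ≤ 1 / 2)
    (hL1 : IntegrableOn (fun x => |μ x|) (Icc a b))
    (hsem : IntegrableOn
      (fun p : ℝ × ℝ => (μ p.1 - μ p.2) ^ 2 / |p.1 - p.2| ^ (1 + 2 * δ))
      (Icc a b ×ˢ Icc a b)) :
    (∫ x in Icc a b, |μ x|) ≤
      ((volume C).toReal ^ ((1 : ℝ) / 2) / (volume N).toReal ^ ((1 : ℝ) / 2)) *
        he ^ ((1 : ℝ) / 2 + δ) *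
        Real.sqrt (∫ ξ in Icc a b, ∫ η in Icc a b,
          (μ ξ - μ η) ^ 2 / |ξ - η| ^ (1 + 2 * δ)) := by
  set I := Icc a b with hIdef
  set K : ℝ → ℝ → ℝ := fun ξ η => (μ ξ - μ η) ^ 2 / |ξ - η| ^ (1 + 2 * δ) with hKdef
  set g : ℝ → ℝ := fun ξ => ∫ η in I, K ξ η with hgdef
  set S : ℝ := ∫ ξ in I, g ξ with hSdef
  set nN : ℝ := (volume N).toReal
  set nC : ℝ := (volume C).toReal
  have hIm : MeasurableSet I := measurableSet_Icc
  have hvolI : volume I = ENNReal.ofReal he := by rw [hIdef, Real.volume_Icc, hab]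
  have hexp : (0 : ℝ) < 1 + 2 * δ := by linarith
  have hKnn : ∀ ξ η, 0 ≤ K ξ η := fun ξ η =>
    div_nonneg (sq_nonneg _) (Real.rpow_nonneg (abs_nonneg _) _)
  have hgnn : ∀ ξ, 0 ≤ g ξ := fun ξ =>
    integral_nonneg fun η => hKnn ξ η
  have hSnn : 0 ≤ S := integral_nonneg hgnn
  -- pointwise bound
  have hpt : ∀ ξ ∈ I, ∀ η ∈ I, (μ ξ - μ η) ^ 2 ≤ he ^ (1 + 2 * δ) * K ξ η := by
    intro ξ hξ η hη
    rcases eq_or_ne ξ η with rfl | hne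
    · simp [hKdef, Real.zero_rpow hexp.ne']
    · have hd0 : 0 < |ξ - η| := abs_pos.mpr (sub_ne_zero.mpr hne)
      have hdle : |ξ - η| ≤ he := by
        rw [← hab]
        rw [abs_le]
        constructor <;> [linarith [hξ.1, hη.2]; linarith [hξ.2, hη.1]]
      have h1 : |ξ - η| ^ (1 + 2 * δ) ≤ he ^ (1 + 2 * δ) :=
        Real.rpow_le_rpow hd0.le hdle hexp.le
      have h2 : 0 < |ξ - η| ^ (1 + 2 * δ) := Real.rpow_pos_of_pos hd0 _
      have : K ξ η = (μ ξ - μ η) ^ 2 / |ξ - η| ^ (1 + 2 * δ) := rfl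
      rw [this, mul_div_assoc', le_div_iff₀ h2]
      nlinarith [sq_nonneg (μ ξ - μ η)]
  -- integrability on the product
  have hKprod : Integrable (fun p : ℝ × ℝ => K p.1 p.2)
      ((volume.restrict I).prod (volume.restrict I)) := by
    rw [Measure.prod_restrict, ← Measure.volume_eq_prod]
    exact hsem
  have hae_int : ∀ᵐ ξ ∂(volume.restrict I), IntegrableOn (fun η => K ξ η) I :=
    hKprod.prod_right_ae
  have hg_int : Integrable g (volume.restrict I) := hKprod.integral_prod_left
  -- key a.e. bound
  have key : ∀ᵐ ξ ∂(volume.restrict I), nN * μ ξ ^ 2 ≤ he ^ (1 + 2 * δ) * g ξ := by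
    filter_upwards [hae_int, ae_restrict_mem hIm] with ξ hint hξ
    have hintN : IntegrableOn (fun η => K ξ η) N := hint.mono_set hNI
    have hintN' : IntegrableOn (fun η => he ^ (1 + 2 * δ) * K ξ η) N := hintN.const_mul _
    have e1 : (∫ _η in N, μ ξ ^ 2) = nN * μ ξ ^ 2 := by
      rw [setIntegral_const, smul_eq_mul, measureReal_def]
    have e2 : (∫ η in N, μ ξ ^ 2) = ∫ η in N, (μ ξ - μ η) ^ 2 := by
      apply integral_congr_ae
      filter_upwards [hμN] with η hη
      rw [hη, sub_zero]
    have e3 : (∫ η in N, (μ ξ - μ η) ^ 2) ≤ ∫ η in N, he ^ (1 + 2 * δ) * K ξ η := by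
      apply setIntegral_mono_on _ hintN' hNm
      · intro η hη
        exact hpt ξ hξ η (hNI hη)
      · apply hintN'.mono' (((measurable_const.sub hμm).pow_const 2)).aestronglyMeasurable
        filter_upwards [ae_restrict_mem hNm] with η hη
        rw [Real.norm_eq_abs, abs_of_nonneg (sq_nonneg _)]
        exact hpt ξ hξ η (hNI hη)
    have e4 : (∫ η in N, he ^ (1 + 2 * δ) * K ξ η) ≤ ∫ η in I, he ^ (1 + 2 * δ) * K ξ η := by
      apply setIntegral_mono_set (hint.const_mul _)
      · filter_upwards with η
        exact mul_nonneg (Real.rpow_nonneg hhe.le _) (hKnn ξ η)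
      · exact hNI.eventuallyLE
    have e5 : (∫ η in I, he ^ (1 + 2 * δ) * K ξ η) = he ^ (1 + 2 * δ) * g ξ :=
      integral_const_mul _ _
    linarith [e1 ▸ e2 ▸ e3, e5 ▸ e4]
  -- integrability of μ²
  have hμ2 : IntegrableOn (fun ξ => μ ξ ^ 2) I := by
    apply ((hg_int.const_mul (he ^ (1 + 2 * δ) / nN)).mono'
      ((hμm.pow_const 2)).aestronglyMeasurable)
    filter_upwards [key] with ξ hξ
    rw [Real.norm_eq_abs, abs_of_nonneg (sq_nonneg _), div_mul_eq_mul_div, le_div_iff₀ hNpos]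
    linarith
  -- L² estimate
  have hL2 : nN * ∫ ξ in I, μ ξ ^ 2 ≤ he ^ (1 + 2 * δ) * S := by
    rw [← integral_const_mul, hSdef, ← integral_const_mul]
    exact integral_mono_ae (hμ2.const_mul _) (hg_int.const_mul _) key
  have hμ2nn : 0 ≤ ∫ ξ in I, μ ξ ^ 2 := integral_nonneg fun ξ => sq_nonneg _
  -- null complement: ∫_I |μ| = ∫_C |μ|
  have hIfin : volume I ≠ ⊤ := by rw [hvolI]; exact ENNReal.ofReal_ne_top
  have hNfin : volume N ≠ ⊤ := ((measure_mono hNI).trans_lt (lt_top_iff_ne_top.mpr hIfin)).ne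
  have hCfin : volume C ≠ ⊤ := ((measure_mono hCI).trans_lt (lt_top_iff_ne_top.mpr hIfin)).ne
  have hUm : MeasurableSet (N ∪ C) := hNm.union hCm
  have hvolU : volume (N ∪ C) = volume I := by
    rw [measure_union hdisj hCm, hvolI, ← ENNReal.ofReal_toReal hNfin,
      ← ENNReal.ofReal_toReal hCfin, ← ENNReal.ofReal_add ENNReal.toReal_nonneg
        ENNReal.toReal_nonneg, hsum]
  have hUfin : volume (N ∪ C) ≠ ⊤ := hvolU ▸ hIfin
  have haeset : (N ∪ C : Set ℝ) =ᵐ[volume] I := by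
    rw [MeasureTheory.ae_eq_set]
    constructor
    · rw [diff_eq_empty.mpr (union_subset hNI hCI)]; exact measure_empty
    · rw [measure_diff (union_subset hNI hCI) hUm.nullMeasurableSet hUfin, hvolU, tsub_self]
  have hsplit : (∫ x in I, |μ x|) = ∫ x in C, |μ x| := by
    rw [← setIntegral_congr_set haeset,
      setIntegral_union hdisj hCm (hL1.mono_set hNI) (hL1.mono_set hCI)]
    have hz : (∫ x in N, |μ x|) = 0 := by
      apply integral_eq_zero_of_ae
      filter_upwards [hμN] with x hx
      simp [hx]
    rw [hz, zero_add]
  -- Cauchy–Schwarz on C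
  have hfinC : IsFiniteMeasure (volume.restrict C) := by
    constructor
    rw [Measure.restrict_apply_univ]
    exact lt_top_iff_ne_top.mpr hCfin
  have hconj : Real.HolderConjugate 2 2 := Real.HolderConjugate.two_two
  have rpow_two_eq : ∀ x : ℝ, x ^ (2 : ℝ) = x ^ 2 := by
    intro x
    rw [show (2 : ℝ) = ((2 : ℕ) : ℝ) by norm_num, Real.rpow_natCast]
  have hmemg : MemLp (fun x => |μ x|) (ENNReal.ofReal 2) (volume.restrict C) := by
    rw [show ENNReal.ofReal 2 = 2 by simp]
    rw [memLp_two_iff_integrable_sq (hμm.abs).aestronglyMeasurable]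
    have : IntegrableOn (fun x => μ x ^ 2) C := hμ2.mono_set hCI
    apply this.congr
    filter_upwards with x
    rw [sq_abs]
  have hCS : (∫ x in C, |μ x|) ≤ nC ^ ((1 : ℝ) / 2) * (∫ x in C, μ x ^ 2) ^ ((1 : ℝ) / 2) := by
    have h := integral_mul_le_Lp_mul_Lq_of_nonneg hconj
      (f := fun _ => (1 : ℝ)) (g := fun x => |μ x|) (μ := volume.restrict C)
      (Filter.Eventually.of_forall fun _ => zero_le_one)
      (Filter.Eventually.of_forall fun x => abs_nonneg _)
      (memLp_const 1) hmemg
    simp only [one_mul, Real.one_rpow] at h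
    calc (∫ x in C, |μ x|) ≤ (∫ _x in C, (1:ℝ)) ^ (1/(2:ℝ)) * (∫ x in C, |μ x| ^ (2:ℝ)) ^ (1/(2:ℝ)) := h
      _ = nC ^ ((1:ℝ)/2) * (∫ x in C, μ x ^ 2) ^ ((1:ℝ)/2) := by
          congr 1
          · rw [setIntegral_const, smul_eq_mul, mul_one, measureReal_def]
          · congr 1
            apply integral_congr_ae
            filter_upwards with x
            rw [rpow_two_eq, sq_abs]
  -- monotonicity C ⊆ I for μ²
  have hCle : (∫ x in C, μ x ^ 2) ≤ ∫ x in I, μ x ^ 2 := by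
    apply setIntegral_mono_set hμ2
    · filter_upwards with x; exact sq_nonneg _
    · exact hCI.eventuallyLE
  have hCnn : 0 ≤ ∫ x in C, μ x ^ 2 := integral_nonneg fun x => sq_nonneg _
  -- combine
  have hIle : (∫ x in I, μ x ^ 2) ≤ he ^ (1 + 2 * δ) * S / nN := by
    rw [le_div_iff₀ hNpos]
    linarith
  have hfinal : (∫ x in C, μ x ^ 2) ^ ((1:ℝ)/2) ≤
      (he ^ (1 + 2 * δ) * S / nN) ^ ((1:ℝ)/2) :=
    Real.rpow_le_rpow hCnn (hCle.trans hIle) (by norm_num)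
  have hrw : (he ^ (1 + 2 * δ) * S / nN) ^ ((1:ℝ)/2) =
      he ^ ((1:ℝ)/2 + δ) * Real.sqrt S / nN ^ ((1:ℝ)/2) := by
    rw [Real.div_rpow (mul_nonneg (Real.rpow_nonneg hhe.le _) hSnn) hNpos.le,
      Real.mul_rpow (Real.rpow_nonneg hhe.le _) hSnn,
      ← Real.rpow_mul hhe.le, show (1 + 2 * δ) * (1 / 2 : ℝ) = 1 / 2 + δ by ring,
      Real.sqrt_eq_rpow]
  calc (∫ x in I, |μ x|) = ∫ x in C, |μ x| := hsplit
    _ ≤ nC ^ ((1:ℝ)/2) * (∫ x in C, μ x ^ 2) ^ ((1:ℝ)/2) := hCS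
    _ ≤ nC ^ ((1:ℝ)/2) * (he ^ ((1:ℝ)/2 + δ) * Real.sqrt S / nN ^ ((1:ℝ)/2)) := by
        rw [← hrw]
        exact mul_le_mul_of_nonneg_left hfinal (Real.rpow_nonneg ENNReal.toReal_nonneg _)
    _ = nC ^ ((1:ℝ)/2) / nN ^ ((1:ℝ)/2) * he ^ ((1:ℝ)/2 + δ) * Real.sqrt S := by ring
end

section
/- Let I be an interval of length h_e, and let N, C be disjoint measurable subsets of I with |N| + |C| = h_e and |C| > 0. Let g : I → ℝ be measurable, vanishing a.e. on C, with finite Gagliardo seminorm |g|_{δ,I} for some 0 < δ ≤ 1/2. Then ‖g‖_{L²(I)} ≤ |C|^{−1/2} · h_e^{1/2+δ} · |g|_{δ,I}. -/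
open MeasureTheory Set

/-- L² estimate on an interval for a function vanishing on a subset `C` of
positive measure, in terms of the Gagliardo fractional seminorm of order `δ`. -/
theorem stmt2 (a b he δ : ℝ) (hhe : 0 < he) (hab : b - a = he)
    (N C : Set ℝ) (hNm : MeasurableSet N) (hCm : MeasurableSet C)
    (hNI : N ⊆ Icc a b) (hCI : C ⊆ Icc a b) (hdisj : Disjoint N C)
    (hsum : (volume N).toReal + (volume C).toReal = he)
    (hCpos : 0 < (volume C).toReal)
    (g : ℝ → ℝ) (hgm : Measurable g)
    (hgC : ∀ᵐ x ∂(volume.restrict C), g x = 0)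
    (hδ : 0 < δ) (hδ' : δ ≤ 1 / 2)
    (hL2 : IntegrableOn (fun x => g x ^ 2) (Icc a b))
    (hsem : IntegrableOn
      (fun p : ℝ × ℝ => (g p.1 - g p.2) ^ 2 / |p.1 - p.2| ^ (1 + 2 * δ))
      (Icc a b ×ˢ Icc a b)) :
    Real.sqrt (∫ x in Icc a b, g x ^ 2) ≤
      (volume C).toReal ^ (-(1 : ℝ) / 2) * he ^ ((1 : ℝ) / 2 + δ) *
        Real.sqrt (∫ ξ in Icc a b, ∫ η in Icc a b,
          (g ξ - g η) ^ 2 / |ξ - η| ^ (1 + 2 * δ)) := by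
  set I := Icc a b with hIdef
  set p : ℝ := 1 + 2 * δ with hpdef
  have hppos : (0 : ℝ) < p := by rw [hpdef]; linarith
  set f : ℝ → ℝ → ℝ := fun ξ η => (g ξ - g η) ^ 2 / |ξ - η| ^ p with hfdef
  have hfnn : ∀ ξ η, 0 ≤ f ξ η := fun ξ η =>
    div_nonneg (sq_nonneg _) (Real.rpow_nonneg (abs_nonneg _) _)
  set c : ℝ := (volume C).toReal with hcdef
  -- product integrability
  have hsem' : Integrable (fun q : ℝ × ℝ => f q.1 q.2)
      ((volume.restrict I).prod (volume.restrict I)) := by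
    rw [Measure.prod_restrict, ← Measure.volume_eq_prod]
    exact hsem
  have hFint : Integrable (fun ξ => ∫ η in I, f ξ η) (volume.restrict I) :=
    hsem'.integral_prod_left
  have hae : ∀ᵐ ξ ∂(volume.restrict I), Integrable (fun η => f ξ η) (volume.restrict I) :=
    hsem'.prod_right_ae
  have hCfin : volume C ≠ ⊤ := (lt_of_le_of_lt (measure_mono hCI) measure_Icc_lt_top).ne
  have hhep : (0 : ℝ) < he ^ p := Real.rpow_pos_of_pos hhe p
  -- key pointwise (in ξ) bound
  have key : ∀ᵐ ξ ∂(volume.restrict I),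
      c * g ξ ^ 2 ≤ he ^ p * ∫ η in I, f ξ η := by
    filter_upwards [hae, ae_restrict_mem measurableSet_Icc] with ξ hint hξ
    have h1 : c * g ξ ^ 2 = ∫ _η in C, g ξ ^ 2 := by
      rw [setIntegral_const, smul_eq_mul]; rfl
    have hptw : ∀ᵐ η ∂(volume.restrict C), g ξ ^ 2 ≤ he ^ p * f ξ η := by
      filter_upwards [hgC, ae_restrict_mem hCm] with η hgη hηC
      have hηI : η ∈ I := hCI hηC
      have hsub : |ξ - η| ≤ he := by
        rw [abs_le]
        constructor <;> [skip; skip] <;>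
          · have := hξ.1; have := hξ.2; have := hηI.1; have := hηI.2; linarith
      rcases eq_or_ne ξ η with h | h
      · have : g ξ = 0 := h ▸ hgη
        rw [this]
        have : (0:ℝ) ≤ he ^ p * f ξ η := mul_nonneg hhep.le (hfnn ξ η)
        simpa using this
      · have habs : 0 < |ξ - η| := abs_pos.mpr (sub_ne_zero.mpr h)
        have hpos : 0 < |ξ - η| ^ p := Real.rpow_pos_of_pos habs p
        have hle : |ξ - η| ^ p ≤ he ^ p :=
          Real.rpow_le_rpow habs.le hsub hppos.le
        have hfeq : f ξ η = g ξ ^ 2 / |ξ - η| ^ p := by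
          simp [hfdef, hgη]
        rw [hfeq]
        calc g ξ ^ 2 = he ^ p * (g ξ ^ 2 / he ^ p) := by
              field_simp
          _ ≤ he ^ p * (g ξ ^ 2 / |ξ - η| ^ p) := by
              gcongr
    have hintC : Integrable (fun η => f ξ η) (volume.restrict C) :=
      MeasureTheory.IntegrableOn.mono_set hint hCI
    have h2 : ∫ _η in C, g ξ ^ 2 ≤ ∫ η in C, he ^ p * f ξ η := by
      refine integral_mono_ae (integrableOn_const hCfin)
        (hintC.const_mul _) hptw
    have h3 : ∫ η in C, he ^ p * f ξ η ≤ ∫ η in I, he ^ p * f ξ η := by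
      refine setIntegral_mono_set (hint.const_mul _) ?_ (HasSubset.Subset.eventuallyLE hCI)
      exact Filter.Eventually.of_forall fun η => mul_nonneg hhep.le (hfnn ξ η)
    calc c * g ξ ^ 2 = ∫ _η in C, g ξ ^ 2 := h1
      _ ≤ ∫ η in C, he ^ p * f ξ η := h2
      _ ≤ ∫ η in I, he ^ p * f ξ η := h3
      _ = he ^ p * ∫ η in I, f ξ η := integral_const_mul _ _
  -- integrate the key bound over ξ
  have main : c * ∫ x in I, g x ^ 2 ≤ he ^ p * ∫ ξ in I, ∫ η in I, f ξ η := by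
    rw [← integral_const_mul, ← integral_const_mul]
    exact integral_mono_ae (hL2.const_mul _) (hFint.const_mul _) key
  set A : ℝ := ∫ x in I, g x ^ 2 with hAdef
  set B : ℝ := ∫ ξ in I, ∫ η in I, f ξ η with hBdef
  have hBnn : 0 ≤ B := integral_nonneg fun ξ => integral_nonneg fun η => hfnn ξ η
  have hAnn : 0 ≤ A := integral_nonneg fun x => sq_nonneg _
  have hstep : A ≤ (he ^ p * B) / c := by
    rw [le_div_iff₀ hCpos]
    linarith [main]
  have e1 : Real.sqrt (he ^ p) = he ^ ((1:ℝ) / 2 + δ) := by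
    rw [Real.sqrt_eq_rpow, ← Real.rpow_mul hhe.le]
    congr 1
    rw [hpdef]; ring
  have e2 : c ^ (-(1:ℝ) / 2) = (Real.sqrt c)⁻¹ := by
    rw [show (-(1:ℝ) / 2) = -(1/2) by ring, Real.rpow_neg hCpos.le, Real.sqrt_eq_rpow]
  calc Real.sqrt A ≤ Real.sqrt ((he ^ p * B) / c) := Real.sqrt_le_sqrt hstep
    _ = c ^ (-(1:ℝ) / 2) * he ^ ((1:ℝ) / 2 + δ) * Real.sqrt B := by
        rw [Real.sqrt_div (by positivity), Real.sqrt_mul hhep.le, e1, e2]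
        ring
end

section
/- Let I be an interval of length h_e, and let N, C be disjoint measurable subsets with |N| + |C| = h_e and |N|, |C| > 0. Let g : I → ℝ be measurable, vanishing a.e. on C, with finite Gagliardo seminorm |g|_{δ,I} for some 0 < δ ≤ 1/2. Then ‖g‖_{L¹(I)} ≤ (|N|^{1/2}/|C|^{1/2}) · h_e^{1/2+δ} · |g|_{δ,I}. -/
open MeasureTheory Set

/-- L¹ estimate on an interval for a function vanishing on `C`, in terms of the
measures of `N`, `C` and the Gagliardo fractional seminorm of order `δ`. -/
theorem stmt3 (a b he δ : ℝ) (hhe : 0 < he) (hab : b - a = he)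
    (N C : Set ℝ) (hNm : MeasurableSet N) (hCm : MeasurableSet C)
    (hNI : N ⊆ Icc a b) (hCI : C ⊆ Icc a b) (hdisj : Disjoint N C)
    (hsum : (volume N).toReal + (volume C).toReal = he)
    (hNpos : 0 < (volume N).toReal) (hCpos : 0 < (volume C).toReal)
    (g : ℝ → ℝ) (hgm : Measurable g)
    (hgC : ∀ᵐ x ∂(volume.restrict C), g x = 0)
    (hδ : 0 < δ) (hδ' : δ ≤ 1 / 2)
    (hL1 : IntegrableOn (fun x => |g x|) (Icc a b))
    (hsem : IntegrableOn
      (fun p : ℝ × ℝ => (g p.1 - g p.2) ^ 2 / |p.1 - p.2| ^ (1 + 2 * δ))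
      (Icc a b ×ˢ Icc a b)) :
    (∫ x in Icc a b, |g x|) ≤
      ((volume N).toReal ^ ((1 : ℝ) / 2) / (volume C).toReal ^ ((1 : ℝ) / 2)) *
        he ^ ((1 : ℝ) / 2 + δ) *
        Real.sqrt (∫ ξ in Icc a b, ∫ η in Icc a b,
          (g ξ - g η) ^ 2 / |ξ - η| ^ (1 + 2 * δ)) := by
  set q : ℝ × ℝ → ℝ := fun p => (g p.1 - g p.2) ^ 2 / |p.1 - p.2| ^ (1 + 2 * δ) with hq_def
  set w : ℝ × ℝ → ℝ := fun p => |p.1 - p.2| ^ (1 + 2 * δ) with hw_def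
  have hwm : Measurable w := by measurability
  have hqm : Measurable q := by
    apply Measurable.div
    · exact ((hgm.comp measurable_fst).sub (hgm.comp measurable_snd)).pow_const 2
    · exact hwm
  have hq_nn : ∀ p, 0 ≤ q p := fun p =>
    div_nonneg (sq_nonneg _) (Real.rpow_nonneg (abs_nonneg _) _)
  -- volume facts
  have hvolIcc : volume (Icc a b) = ENNReal.ofReal he := by
    rw [Real.volume_Icc, hab]
  have hNfin : volume N ≠ ⊤ :=
    ne_top_of_le_ne_top (by rw [hvolIcc]; exact ENNReal.ofReal_ne_top) (measure_mono hNI)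
  have hCfin : volume C ≠ ⊤ :=
    ne_top_of_le_ne_top (by rw [hvolIcc]; exact ENNReal.ofReal_ne_top) (measure_mono hCI)
  have hNC : volume (N ∪ C) = ENNReal.ofReal he := by
    rw [measure_union hdisj hCm]
    conv_lhs => rw [← ENNReal.ofReal_toReal hNfin, ← ENNReal.ofReal_toReal hCfin]
    rw [← ENNReal.ofReal_add ENNReal.toReal_nonneg ENNReal.toReal_nonneg, hsum]
  have hae : Icc a b =ᵐ[volume] (N ∪ C : Set ℝ) := by
    rw [MeasureTheory.ae_eq_set]
    constructor
    · rw [measure_diff (union_subset hNI hCI) (hNm.union hCm).nullMeasurableSet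
        (by rw [hNC]; exact ENNReal.ofReal_ne_top), hvolIcc, hNC, tsub_self]
    · rw [Set.diff_eq_empty.mpr (union_subset hNI hCI), measure_empty]
  -- split the L¹ norm
  have hLsplit : ∫⁻ x in Icc a b, ENNReal.ofReal |g x| = ∫⁻ x in N, ENNReal.ofReal |g x| := by
    rw [setLIntegral_congr hae, lintegral_union hCm hdisj]
    have h0 : ∫⁻ x in C, ENNReal.ofReal |g x| = 0 := by
      have hz : (fun x => ENNReal.ofReal |g x|) =ᵐ[volume.restrict C] 0 :=
        hgC.mono fun x hx => by simp [hx]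
      rw [lintegral_congr_ae hz]
      simp
    rw [h0, add_zero]
  have hA_nn : 0 ≤ ∫ x in Icc a b, |g x| := integral_nonneg fun x => abs_nonneg _
  have hLofReal : ENNReal.ofReal (∫ x in Icc a b, |g x|)
      = ∫⁻ x in Icc a b, ENNReal.ofReal |g x| :=
    ofReal_integral_eq_lintegral_ofReal hL1 (Filter.Eventually.of_forall fun x => abs_nonneg _)
  -- product step
  have hB : ∫⁻ p in N ×ˢ C, ENNReal.ofReal |g p.1 - g p.2|
      = (∫⁻ x in N, ENNReal.ofReal |g x|) * volume C := by
    rw [Measure.volume_eq_prod, ← Measure.prod_restrict]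
    have hm : Measurable fun p : ℝ × ℝ => ENNReal.ofReal |g p.1 - g p.2| :=
      Measurable.ennreal_ofReal (((hgm.comp measurable_fst).sub (hgm.comp measurable_snd)).abs)
    rw [lintegral_prod _ hm.aemeasurable]
    have hinner : ∀ ξ : ℝ, ∫⁻ η in C, ENNReal.ofReal |g ξ - g η|
        = ENNReal.ofReal |g ξ| * volume C := fun ξ => by
      rw [lintegral_congr_ae (hgC.mono fun η hη => by rw [hη, sub_zero]), setLIntegral_const]
    simp_rw [hinner]
    exact lintegral_mul_const _ hgm.abs.ennreal_ofReal
  -- pointwise Cauchy-Schwarz factorization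
  have hpt : ∀ p : ℝ × ℝ, ENNReal.ofReal |g p.1 - g p.2|
      ≤ (ENNReal.ofReal (q p)) ^ ((1:ℝ)/2) * (ENNReal.ofReal (w p)) ^ ((1:ℝ)/2) := by
    intro p
    rcases eq_or_ne p.1 p.2 with h | h
    · rw [h, sub_self, abs_zero, ENNReal.ofReal_zero]
      exact zero_le
    · have hw0 : 0 < w p := Real.rpow_pos_of_pos (abs_pos.2 (sub_ne_zero.2 h)) _
      rw [ENNReal.ofReal_rpow_of_nonneg (hq_nn p) (by norm_num),
        ENNReal.ofReal_rpow_of_nonneg hw0.le (by norm_num),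
        ← ENNReal.ofReal_mul (Real.rpow_nonneg (hq_nn p) _),
        ← Real.mul_rpow (hq_nn p) hw0.le]
      apply le_of_eq
      congr 1
      rw [hq_def]
      simp only
      rw [div_mul_cancel₀ _ hw0.ne', ← Real.sqrt_eq_rpow, Real.sqrt_sq_eq_abs]
  -- Hölder on N ×ˢ C
  have hCS : ∫⁻ p in N ×ˢ C, ENNReal.ofReal |g p.1 - g p.2|
      ≤ (∫⁻ p in N ×ˢ C, ENNReal.ofReal (q p)) ^ ((1:ℝ)/2)
        * (∫⁻ p in N ×ˢ C, ENNReal.ofReal (w p)) ^ ((1:ℝ)/2) := by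
    calc ∫⁻ p in N ×ˢ C, ENNReal.ofReal |g p.1 - g p.2|
        ≤ ∫⁻ p in N ×ˢ C,
            (ENNReal.ofReal (q p)) ^ ((1:ℝ)/2) * (ENNReal.ofReal (w p)) ^ ((1:ℝ)/2) :=
          lintegral_mono hpt
      _ ≤ _ := by
          have hpq : (2:ℝ).HolderConjugate 2 := Real.HolderConjugate.two_two
          have := ENNReal.lintegral_mul_le_Lp_mul_Lq (volume.restrict (N ×ˢ C)) hpq
            (f := fun p => (ENNReal.ofReal (q p)) ^ ((1:ℝ)/2))
            (g := fun p => (ENNReal.ofReal (w p)) ^ ((1:ℝ)/2))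
            (hqm.ennreal_ofReal.pow_const _).aemeasurable
            (hwm.ennreal_ofReal.pow_const _).aemeasurable
          simp_rw [Pi.mul_apply, ← ENNReal.rpow_mul] at this
          norm_num [ENNReal.rpow_one] at this
          exact this
  -- weight integral bound
  have hW : ∫⁻ p in N ×ˢ C, ENNReal.ofReal (w p)
      ≤ ENNReal.ofReal (he ^ (1 + 2 * δ)) * (volume N * volume C) := by
    calc ∫⁻ p in N ×ˢ C, ENNReal.ofReal (w p)
        ≤ ∫⁻ _ in N ×ˢ C, ENNReal.ofReal (he ^ (1 + 2 * δ)) := by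
          apply setLIntegral_mono measurable_const
          intro p hp
          apply ENNReal.ofReal_le_ofReal
          apply Real.rpow_le_rpow (abs_nonneg _) _ (by positivity)
          have h1 := hNI hp.1
          have h2 := hCI hp.2
          rw [abs_sub_le_iff, ← hab]
          constructor <;> linarith [h1.1, h1.2, h2.1, h2.2]
      _ = ENNReal.ofReal (he ^ (1 + 2 * δ)) * volume (N ×ˢ C) := setLIntegral_const _ _
      _ = ENNReal.ofReal (he ^ (1 + 2 * δ)) * (volume N * volume C) := by
          rw [Measure.volume_eq_prod, Measure.prod_prod]
  -- q integral bound
  have hQ : ∫⁻ p in N ×ˢ C, ENNReal.ofReal (q p)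
      ≤ ∫⁻ p in Icc a b ×ˢ Icc a b, ENNReal.ofReal (q p) :=
    lintegral_mono_set (prod_mono hNI hCI)
  -- the Gagliardo seminorm squared as a real number
  set Rp : ℝ := ∫ p in Icc a b ×ˢ Icc a b, q p with hRp_def
  have hRp_nn : 0 ≤ Rp := integral_nonneg fun p => hq_nn p
  have hS : ENNReal.ofReal Rp = ∫⁻ p in Icc a b ×ˢ Icc a b, ENNReal.ofReal (q p) :=
    ofReal_integral_eq_lintegral_ofReal hsem (Filter.Eventually.of_forall hq_nn)
  -- main ENNReal inequality
  have main : ENNReal.ofReal (∫ x in Icc a b, |g x|) * volume C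
      ≤ ENNReal.ofReal Rp ^ ((1:ℝ)/2)
        * (ENNReal.ofReal (he ^ (1 + 2 * δ)) * (volume N * volume C)) ^ ((1:ℝ)/2) := by
    rw [hLofReal, hLsplit, ← hB]
    refine hCS.trans (mul_le_mul' ?_ ?_)
    · rw [hS]
      exact ENNReal.rpow_le_rpow hQ (by norm_num)
    · exact ENNReal.rpow_le_rpow hW (by norm_num)
  -- convert to reals
  have hRHSfin : ENNReal.ofReal Rp ^ ((1:ℝ)/2)
      * (ENNReal.ofReal (he ^ (1 + 2 * δ)) * (volume N * volume C)) ^ ((1:ℝ)/2) ≠ ⊤ := by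
    apply ENNReal.mul_ne_top
    · exact ENNReal.rpow_ne_top_of_nonneg (by norm_num) ENNReal.ofReal_ne_top
    · exact ENNReal.rpow_ne_top_of_nonneg (by norm_num)
        (ENNReal.mul_ne_top ENNReal.ofReal_ne_top (ENNReal.mul_ne_top hNfin hCfin))
  have final := ENNReal.toReal_mono hRHSfin main
  rw [ENNReal.toReal_mul, ENNReal.toReal_ofReal hA_nn, ENNReal.toReal_mul,
    ← ENNReal.toReal_rpow, ← ENNReal.toReal_rpow, ENNReal.toReal_ofReal hRp_nn,
    ENNReal.toReal_mul, ENNReal.toReal_mul,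
    ENNReal.toReal_ofReal (by positivity : (0:ℝ) ≤ he ^ (1 + 2 * δ))] at final
  -- Fubini for the RHS
  have hFub : (∫ ξ in Icc a b, ∫ η in Icc a b, q (ξ, η)) = Rp := by
    rw [hRp_def]
    rw [Measure.volume_eq_prod] at hsem ⊢
    exact (setIntegral_prod _ hsem).symm
  simp only [hq_def] at hFub
  rw [hFub, Real.sqrt_eq_rpow]
  -- final algebra
  refine le_of_mul_le_mul_right ?_ hCpos
  refine final.trans (le_of_eq ?_)
  have hICsq : (volume C).toReal ^ ((1:ℝ)/2) * (volume C).toReal ^ ((1:ℝ)/2)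
      = (volume C).toReal := by
    rw [← Real.rpow_add hCpos]; norm_num
  have h1 : (he ^ (1 + 2 * δ)) ^ ((1:ℝ)/2) = he ^ ((1:ℝ)/2 + δ) := by
    rw [← Real.rpow_mul hhe.le]; congr 1; ring
  have h2 : ((volume N).toReal * (volume C).toReal) ^ ((1:ℝ)/2)
      = (volume N).toReal ^ ((1:ℝ)/2) * (volume C).toReal ^ ((1:ℝ)/2) :=
    Real.mul_rpow hNpos.le hCpos.le
  rw [Real.mul_rpow (by positivity) (by positivity), h1, h2]
  have hy : (volume C).toReal ^ ((1:ℝ)/2) ≠ 0 := (Real.rpow_pos_of_pos hCpos _).ne'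
  set x := (volume N).toReal ^ ((1:ℝ)/2)
  set y := (volume C).toReal ^ ((1:ℝ)/2)
  rw [← hICsq]
  field_simp
end
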